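/- For every β ∈ (0,1) there exists a continuous injective map γ : [0,1] → [0,1]² with γ(0) = (0,0), γ(1) = (1,1), and λ₂(γ([0,1])) = β. -/

import Mathlib

open MeasureTheory Set Filter Topology
open scoped ENNReal NNReal

namespace LanceThomas

noncomputable section


def T : Set (ℝ × ℝ) := {p | 0 ≤ p.2 ∧ p.2 ≤ p.1 ∧ p.1 + p.2 ≤ 1}

def F0 (c : ℝ) (p : ℝ × ℝ) : ℝ × ℝ := (c / 2 * (p.1 + p.2), c / 2 * (p.1 - p.2))

def F1 (c : ℝ) (p : ℝ × ℝ) : ℝ × ℝ :=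
  (1 + c / 2 * (p.1 - p.2 - 1), c / 2 * (1 - p.1 - p.2))

def sg (c : ℝ) (u : ℝ) : ℝ × ℝ := (c / 2 + u * (1 - c), c / 2)

lemma T_def {p : ℝ × ℝ} : p ∈ T ↔ 0 ≤ p.2 ∧ p.2 ≤ p.1 ∧ p.1 + p.2 ≤ 1 := Iff.rfl

lemma F0_mem {c : ℝ} (hc0 : 0 < c) (hc1 : c < 1) {p : ℝ × ℝ} (hp : p ∈ T) : F0 c p ∈ T := by
  obtain ⟨h1, h2, h3⟩ := hp
  refine ⟨?_, ?_, ?_⟩ <;> simp only [F0] <;> nlinarith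

lemma F1_mem {c : ℝ} (hc0 : 0 < c) (hc1 : c < 1) {p : ℝ × ℝ} (hp : p ∈ T) : F1 c p ∈ T := by
  obtain ⟨h1, h2, h3⟩ := hp
  refine ⟨?_, ?_, ?_⟩ <;> simp only [F1] <;> nlinarith

lemma sg_mem {c : ℝ} (hc0 : 0 < c) (hc1 : c < 1) {u : ℝ} (hu : u ∈ Icc (0:ℝ) 1) : sg c u ∈ T := by
  obtain ⟨h1, h2⟩ := hu
  refine ⟨?_, ?_, ?_⟩ <;> simp only [sg] <;> nlinarith

lemma F0_a {c : ℝ} : F0 c (0, 0) = (0, 0) := by simp [F0]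

lemma F0_b {c : ℝ} : F0 c (1, 0) = (c/2, c/2) := by simp [F0]

lemma F1_a {c : ℝ} : F1 c (0, 0) = (1 - c/2, c/2) := by
  simp only [F1]; norm_num; ring

lemma F1_b {c : ℝ} : F1 c (1, 0) = (1, 0) := by
  simp only [F1]; norm_num

lemma sg_zero {c : ℝ} : sg c 0 = (c/2, c/2) := by simp [sg]

lemma sg_one {c : ℝ} : sg c 1 = (1 - c/2, c/2) := by simp [sg]; ring

lemma F0_inj {c : ℝ} (hc0 : 0 < c) {p q : ℝ × ℝ} (h : F0 c p = F0 c q) : p = q := by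
  simp only [F0, Prod.mk.injEq] at h
  obtain ⟨h1, h2⟩ := h
  have e1 : p.1 = q.1 := by nlinarith
  have e2 : p.2 = q.2 := by nlinarith
  exact Prod.ext e1 e2

lemma F1_inj {c : ℝ} (hc0 : 0 < c) {p q : ℝ × ℝ} (h : F1 c p = F1 c q) : p = q := by
  simp only [F1, Prod.mk.injEq] at h
  obtain ⟨h1, h2⟩ := h
  have e1 : p.1 = q.1 := by nlinarith
  have e2 : p.2 = q.2 := by nlinarith
  exact Prod.ext e1 e2

lemma F0_strip {c : ℝ} (hc0 : 0 < c) {p : ℝ × ℝ} (hp : p ∈ T) : (F0 c p).1 ≤ c / 2 := by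
  obtain ⟨h1, h2, h3⟩ := hp; simp only [F0]; nlinarith

lemma F1_strip {c : ℝ} (hc0 : 0 < c) {p : ℝ × ℝ} (hp : p ∈ T) : 1 - c / 2 ≤ (F1 c p).1 := by
  obtain ⟨h1, h2, h3⟩ := hp; simp only [F1]; nlinarith

lemma continuous_F0 {c : ℝ} : Continuous (F0 c) := by unfold F0; fun_prop

lemma continuous_F1 {c : ℝ} : Continuous (F1 c) := by unfold F1; fun_prop

lemma continuous_sg {c : ℝ} : Continuous (sg c) := by unfold sg; fun_prop



/-- Euclidean distance on `ℝ × ℝ` (the product metric is the sup metric). -/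
def dE (p q : ℝ × ℝ) : ℝ := ‖Complex.mk (p.1 - q.1) (p.2 - q.2)‖

lemma dE_nonneg (p q : ℝ × ℝ) : 0 ≤ dE p q := norm_nonneg _

lemma dE_sq (p q : ℝ × ℝ) : dE p q ^ 2 = (p.1 - q.1)^2 + (p.2 - q.2)^2 := by
  rw [dE, Complex.sq_norm, Complex.normSq_mk]; ring

lemma dE_triangle (p q r : ℝ × ℝ) : dE p r ≤ dE p q + dE q r := by
  have key : Complex.mk (p.1 - q.1) (p.2 - q.2) + Complex.mk (q.1 - r.1) (q.2 - r.2)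
      = Complex.mk (p.1 - r.1) (p.2 - r.2) := by
    apply Complex.ext <;> simp <;> ring
  have := norm_add_le (Complex.mk (p.1 - q.1) (p.2 - q.2))
    (Complex.mk (q.1 - r.1) (q.2 - r.2))
  rw [key] at this
  exact this

lemma dist_le_dE (p q : ℝ × ℝ) : dist p q ≤ dE p q := by
  rw [Prod.dist_eq, max_le_iff]
  constructor
  · simpa [Real.dist_eq, dE] using Complex.abs_re_le_norm (Complex.mk (p.1 - q.1) (p.2 - q.2))
  · simpa [Real.dist_eq, dE] using Complex.abs_im_le_norm (Complex.mk (p.1 - q.1) (p.2 - q.2))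

lemma dE_le_of_sq {p q : ℝ × ℝ} {b : ℝ} (hb : 0 ≤ b) (h : dE p q ^ 2 ≤ b ^ 2) : dE p q ≤ b := by
  nlinarith [dE_nonneg p q]


lemma dE_F0 {c : ℝ} (hc0 : 0 < c) (hc1 : c < 1) (p q : ℝ × ℝ) :
    dE (F0 c p) (F0 c q) ≤ 4/5 * dE p q := by
  apply dE_le_of_sq (mul_nonneg (by norm_num) (dE_nonneg p q))
  have hS : (0:ℝ) ≤ (p.1 - q.1)^2 + (p.2 - q.2)^2 := by positivity
  have hcc : c^2 ≤ 1 := by nlinarith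
  rw [dE_sq, mul_pow, dE_sq p q]
  simp only [F0]
  nlinarith [mul_le_mul_of_nonneg_right hcc hS]

lemma dE_F1 {c : ℝ} (hc0 : 0 < c) (hc1 : c < 1) (p q : ℝ × ℝ) :
    dE (F1 c p) (F1 c q) ≤ 4/5 * dE p q := by
  apply dE_le_of_sq (mul_nonneg (by norm_num) (dE_nonneg p q))
  have hS : (0:ℝ) ≤ (p.1 - q.1)^2 + (p.2 - q.2)^2 := by positivity
  have hcc : c^2 ≤ 1 := by nlinarith
  rw [dE_sq, mul_pow, dE_sq p q]
  simp only [F1]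
  nlinarith [mul_le_mul_of_nonneg_right hcc hS]

lemma dE_le_two {p q : ℝ × ℝ} (hp : p ∈ T) (hq : q ∈ T) : dE p q ≤ 2 := by
  obtain ⟨a1, a2, a3⟩ := hp
  obtain ⟨b1, b2, b3⟩ := hq
  apply dE_le_of_sq (by norm_num)
  rw [dE_sq]
  nlinarith

variable (μ : ℕ → ℝ)

/-- Approximating curves. -/
def gam : ℕ → ℕ → ℝ → ℝ × ℝ
  | 0 => fun _ t => (t, 0)
  | (n+1) => fun k t =>
      if 3 * t ≤ 1 then F0 (μ k) (gam n (k+1) (3*t))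
      else if 3 * t ≤ 2 then sg (μ k) (3*t - 1)
      else F1 (μ k) (gam n (k+1) (3*t - 2))

variable {μ}

lemma gam_zero (n k : ℕ) : gam μ n k 0 = (0, 0) := by
  induction n generalizing k with
  | zero => rfl
  | succ n ih =>
      show (if (3*(0:ℝ) ≤ 1) then _ else _) = _
      rw [if_pos (by norm_num), show (3:ℝ)*0 = 0 by ring, ih, F0_a]

lemma gam_one (n k : ℕ) : gam μ n k 1 = (1, 0) := by
  induction n generalizing k with
  | zero => rfl
  | succ n ih =>
      show (if (3*(1:ℝ) ≤ 1) then _ else _) = _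
      rw [if_neg (by norm_num), if_neg (by norm_num), show (3:ℝ)*1-2 = 1 by ring, ih, F1_b]

variable (hμ : ∀ j, 0 < μ j ∧ μ j < 1)
include hμ

lemma gam_mem (n k : ℕ) {t : ℝ} (ht : t ∈ Icc (0:ℝ) 1) : gam μ n k t ∈ T := by
  induction n generalizing k t with
  | zero =>
      show ((t, 0) : ℝ × ℝ) ∈ T
      exact ⟨le_refl _, ht.1, by simpa using ht.2⟩
  | succ n ih =>
      show (if (3*t ≤ 1) then _ else _) ∈ T
      split_ifs with h1 h2
      · exact F0_mem (hμ k).1 (hμ k).2 (ih (k+1) ⟨by linarith [ht.1], by linarith⟩)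
      · exact sg_mem (hμ k).1 (hμ k).2 ⟨by linarith, by linarith⟩
      · exact F1_mem (hμ k).1 (hμ k).2 (ih (k+1) ⟨by linarith, by linarith [ht.2]⟩)

omit hμ in
lemma gam_cont (n k : ℕ) : Continuous (gam μ n k) := by
  induction n generalizing k with
  | zero => exact (continuous_id.prodMk continuous_const)
  | succ n ih =>
      show Continuous fun t => if 3 * t ≤ 1 then F0 (μ k) (gam μ n (k+1) (3*t))
        else if 3 * t ≤ 2 then sg (μ k) (3*t - 1) else F1 (μ k) (gam μ n (k+1) (3*t - 2))
      apply Continuous.if_le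
      · exact continuous_F0.comp ((ih (k+1)).comp (by fun_prop))
      · apply Continuous.if_le
        · exact continuous_sg.comp (by fun_prop)
        · exact continuous_F1.comp ((ih (k+1)).comp (by fun_prop))
        · fun_prop
        · exact continuous_const
        · intro x hx
          have e1 : 3*x - 1 = (1:ℝ) := by linarith
          have e2 : 3*x - 2 = (0:ℝ) := by linarith
          rw [e1, e2, gam_zero, sg_one, F1_a]
      · fun_prop
      · exact continuous_const
      · intro x hx
        rw [if_pos (by linarith), hx, gam_one, F0_b, show (1:ℝ)-1 = 0 by norm_num, sg_zero]

omit hμ in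
lemma dE_self (p : ℝ × ℝ) : dE p p = 0 := by
  have : Complex.mk (p.1 - p.1) (p.2 - p.2) = 0 := by
    apply Complex.ext <;> simp
  rw [dE, this, norm_zero]

omit hμ in
lemma continuous_dE (p : ℝ × ℝ) : Continuous (dE p) := by
  have h : Continuous fun q : ℝ × ℝ => Complex.mk (p.1 - q.1) (p.2 - q.2) := by
    simp only [Complex.mk_eq_add_mul_I]
    fun_prop
  exact continuous_norm.comp h

lemma gam_step (n : ℕ) : ∀ k : ℕ, ∀ t ∈ Icc (0:ℝ) 1,
    dE (gam μ n k t) (gam μ (n+1) k t) ≤ 2 * (4/5)^n := by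
  induction n with
  | zero =>
      intro k t ht
      have h1 : gam μ 0 k t ∈ T := gam_mem hμ 0 k ht
      have h2 : gam μ 1 k t ∈ T := gam_mem hμ 1 k ht
      simpa using dE_le_two h1 h2
  | succ n ih =>
      intro k t ht
      show dE
        (if 3*t ≤ 1 then F0 (μ k) (gam μ n (k+1) (3*t))
          else if 3*t ≤ 2 then sg (μ k) (3*t-1) else F1 (μ k) (gam μ n (k+1) (3*t-2)))
        (if 3*t ≤ 1 then F0 (μ k) (gam μ (n+1) (k+1) (3*t))
          else if 3*t ≤ 2 then sg (μ k) (3*t-1) else F1 (μ k) (gam μ (n+1) (k+1) (3*t-2)))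
        ≤ 2 * (4/5)^(n+1)
      have hr : (0:ℝ) < 4/5 := by norm_num
      split_ifs with h1 h2
      · calc dE (F0 (μ k) (gam μ n (k+1) (3*t))) (F0 (μ k) (gam μ (n+1) (k+1) (3*t)))
            ≤ 4/5 * dE (gam μ n (k+1) (3*t)) (gam μ (n+1) (k+1) (3*t)) :=
              dE_F0 (hμ k).1 (hμ k).2 _ _
          _ ≤ 4/5 * (2 * (4/5)^n) := by
              have := ih (k+1) (3*t) ⟨by linarith [ht.1], by linarith⟩
              nlinarith
          _ = 2 * (4/5)^(n+1) := by ring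
      · rw [dE_self]
        positivity
      · calc dE (F1 (μ k) (gam μ n (k+1) (3*t-2))) (F1 (μ k) (gam μ (n+1) (k+1) (3*t-2)))
            ≤ 4/5 * dE (gam μ n (k+1) (3*t-2)) (gam μ (n+1) (k+1) (3*t-2)) :=
              dE_F1 (hμ k).1 (hμ k).2 _ _
          _ ≤ 4/5 * (2 * (4/5)^n) := by
              have := ih (k+1) (3*t-2) ⟨by linarith, by linarith [ht.2]⟩
              nlinarith
          _ = 2 * (4/5)^(n+1) := by ring

lemma gam_tele (p : ℕ) : ∀ n k : ℕ, ∀ t ∈ Icc (0:ℝ) 1,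
    dE (gam μ n k t) (gam μ (n+p) k t) ≤ 10 * (4/5)^n := by
  induction p with
  | zero =>
      intro n k t ht
      simp only [Nat.add_zero]
      rw [dE_self]
      positivity
  | succ p ih =>
      intro n k t ht
      have e : n + (p+1) = (n+1) + p := by omega
      rw [e]
      calc dE (gam μ n k t) (gam μ ((n+1)+p) k t)
          ≤ dE (gam μ n k t) (gam μ (n+1) k t) + dE (gam μ (n+1) k t) (gam μ ((n+1)+p) k t) :=
            dE_triangle _ _ _
        _ ≤ 2 * (4/5)^n + 10 * (4/5)^(n+1) := by
            have h1 := gam_step hμ n k t ht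
            have h2 := ih (n+1) k t ht
            linarith
        _ ≤ 10 * (4/5)^n := by
            have : ((4:ℝ)/5)^(n+1) = (4/5)^n * (4/5) := pow_succ _ _
            nlinarith [pow_pos (show (0:ℝ) < 4/5 by norm_num) n]

omit hμ in
/-- The limit curve, rooted at level `k`. -/
def G (k : ℕ) (t : ℝ) : ℝ × ℝ := limUnder atTop fun n => gam μ n k t

lemma gam_tendsto (k : ℕ) {t : ℝ} (ht : t ∈ Icc (0:ℝ) 1) :
    Tendsto (fun n => gam μ n k t) atTop (𝓝 (G (μ := μ) k t)) := by
  have cs : CauchySeq (fun n => gam μ n k t) := by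
    apply cauchySeq_of_le_geometric (4/5) 2 (by norm_num)
    intro n
    exact (dist_le_dE _ _).trans (gam_step hμ n k t ht)
  obtain ⟨x, hx⟩ := cauchySeq_tendsto_of_complete cs
  rwa [show G (μ := μ) k t = x from hx.limUnder_eq]

lemma G_dist (n k : ℕ) {t : ℝ} (ht : t ∈ Icc (0:ℝ) 1) :
    dE (gam μ n k t) (G (μ := μ) k t) ≤ 10 * (4/5)^n := by
  have h1 : Tendsto (fun p => gam μ (p+n) k t) atTop (𝓝 (G (μ := μ) k t)) :=
    (gam_tendsto hμ k ht).comp (tendsto_add_atTop_nat n)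
  have h2 : Tendsto (fun p => dE (gam μ n k t) (gam μ (p+n) k t)) atTop
      (𝓝 (dE (gam μ n k t) (G (μ := μ) k t))) :=
    ((continuous_dE _).tendsto _).comp h1
  apply le_of_tendsto h2
  filter_upwards with p
  have e : p + n = n + p := by omega
  rw [e]
  exact gam_tele hμ p n k t ht

lemma G_cont (k : ℕ) : ContinuousOn (G (μ := μ)  k) (Icc (0:ℝ) 1) := by
  have : TendstoUniformlyOn (fun n => gam μ n k) (G (μ := μ) k) atTop (Icc (0:ℝ) 1) := by
    rw [Metric.tendstoUniformlyOn_iff]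
    intro ε hε
    have hr : Tendsto (fun n : ℕ => (10:ℝ) * (4/5)^n) atTop (𝓝 0) := by
      rw [show (0:ℝ) = 10 * 0 by ring]
      exact (tendsto_pow_atTop_nhds_zero_of_lt_one (by norm_num) (by norm_num)).const_mul 10
    filter_upwards [hr.eventually (eventually_lt_nhds hε)] with n hn t ht
    calc dist (G (μ := μ) k t) (gam μ n k t) = dist (gam μ n k t) (G (μ := μ) k t) := dist_comm _ _
      _ ≤ dE (gam μ n k t) (G (μ := μ) k t) := dist_le_dE _ _
      _ ≤ 10 * (4/5)^n := G_dist hμ n k ht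
      _ < ε := hn
  exact this.continuousOn (Filter.Eventually.of_forall fun n => (gam_cont n k).continuousOn).frequently

omit hμ in
lemma G_zero (k : ℕ) : G (μ := μ) k 0 = (0, 0) := by
  have h : (fun n => gam μ n k 0) = fun _ => ((0:ℝ), (0:ℝ)) := funext fun n => gam_zero n k
  rw [G, h]
  exact Tendsto.limUnder_eq tendsto_const_nhds

omit hμ in
lemma G_one (k : ℕ) : G (μ := μ) k 1 = (1, 0) := by
  have h : (fun n => gam μ n k 1) = fun _ => ((1:ℝ), (0:ℝ)) := funext fun n => gam_one n k
  rw [G, h]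
  exact Tendsto.limUnder_eq tendsto_const_nhds

omit hμ in
lemma isClosed_T : IsClosed T := by
  have : T = {p : ℝ × ℝ | 0 ≤ p.2} ∩ ({p | p.2 ≤ p.1} ∩ {p | p.1 + p.2 ≤ 1}) := rfl
  rw [this]
  exact (isClosed_le (by fun_prop) (by fun_prop)).inter
    ((isClosed_le (by fun_prop) (by fun_prop)).inter (isClosed_le (by fun_prop) (by fun_prop)))

lemma G_mem (k : ℕ) {t : ℝ} (ht : t ∈ Icc (0:ℝ) 1) : G (μ := μ) k t ∈ T :=
  isClosed_T.mem_of_tendsto (gam_tendsto hμ k ht)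
    (Filter.Eventually.of_forall fun n => gam_mem hμ n k ht)

lemma G_rec (k : ℕ) {t : ℝ} (ht : t ∈ Icc (0:ℝ) 1) :
    G (μ := μ) k t = if 3*t ≤ 1 then F0 (μ k) (G (μ := μ) (k+1) (3*t))
      else if 3*t ≤ 2 then sg (μ k) (3*t-1) else F1 (μ k) (G (μ := μ) (k+1) (3*t-2)) := by
  have h1 : Tendsto (fun n => gam μ (n+1) k t) atTop (𝓝 (G (μ := μ) k t)) :=
    (gam_tendsto hμ k ht).comp (tendsto_add_atTop_nat 1)
  have h2 : (fun n => gam μ (n+1) k t) = fun n =>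
      if 3*t ≤ 1 then F0 (μ k) (gam μ n (k+1) (3*t))
      else if 3*t ≤ 2 then sg (μ k) (3*t-1) else F1 (μ k) (gam μ n (k+1) (3*t-2)) := rfl
  rw [h2] at h1
  by_cases hA : 3*t ≤ 1
  · simp only [if_pos hA] at h1 ⊢
    have h3 : Tendsto (fun n => F0 (μ k) (gam μ n (k+1) (3*t))) atTop
        (𝓝 (F0 (μ k) (G (μ := μ) (k+1) (3*t)))) :=
      (continuous_F0.tendsto _).comp (gam_tendsto hμ (k+1) ⟨by linarith [ht.1], by linarith⟩)
    exact tendsto_nhds_unique h1 h3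
  · by_cases hB : 3*t ≤ 2
    · simp only [if_neg hA, if_pos hB] at h1 ⊢
      exact tendsto_nhds_unique h1 tendsto_const_nhds
    · simp only [if_neg hA, if_neg hB] at h1 ⊢
      have h3 : Tendsto (fun n => F1 (μ k) (gam μ n (k+1) (3*t-2))) atTop
          (𝓝 (F1 (μ k) (G (μ := μ) (k+1) (3*t-2)))) :=
        (continuous_F1.tendsto _).comp (gam_tendsto hμ (k+1)
          ⟨by linarith, by linarith [ht.2]⟩)
      exact tendsto_nhds_unique h1 h3

lemma G_eq_zero (k : ℕ) {t : ℝ} (ht : t ∈ Icc (0:ℝ) 1) (h : G (μ := μ) k t = (0, 0)) :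
    t = 0 := by
  have key : ∀ n : ℕ, ∀ k : ℕ, ∀ t : ℝ, t ∈ Icc (0:ℝ) 1 → G (μ := μ) k t = (0, 0) →
      t ≤ (1/3 : ℝ)^n := by
    intro n
    induction n with
    | zero => intro k t ht _; simpa using ht.2
    | succ n ih =>
        intro k t ht h
        rw [G_rec hμ k ht] at h
        split_ifs at h with h1 h2
        · have h3 : G (μ := μ) (k+1) (3*t) = (0, 0) := F0_inj (hμ k).1 (by rw [h, F0_a])
          have h4 := ih (k+1) (3*t) ⟨by linarith [ht.1], by linarith⟩ h3
          rw [pow_succ]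
          linarith
        · exfalso
          have : (sg (μ k) (3*t-1)).2 = 0 := by rw [h]
          simp only [sg] at this
          linarith [(hμ k).1]
        · exfalso
          have hm := G_mem hμ (k+1) (⟨by linarith, by linarith [ht.2]⟩ : 3*t-2 ∈ Icc (0:ℝ) 1)
          have h5 := F1_strip (hμ k).1 hm
          rw [h] at h5
          simp at h5
          linarith [(hμ k).2]
  have h0 : t ≤ 0 := by
    have hlim : Tendsto (fun n : ℕ => (1/3 : ℝ)^n) atTop (𝓝 0) :=
      tendsto_pow_atTop_nhds_zero_of_lt_one (by norm_num) (by norm_num)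
    exact ge_of_tendsto hlim (Filter.Eventually.of_forall fun n => key n k t ht h)
  linarith [ht.1, h0]

lemma G_eq_one (k : ℕ) {t : ℝ} (ht : t ∈ Icc (0:ℝ) 1) (h : G (μ := μ) k t = (1, 0)) :
    t = 1 := by
  have key : ∀ n : ℕ, ∀ k : ℕ, ∀ t : ℝ, t ∈ Icc (0:ℝ) 1 → G (μ := μ) k t = (1, 0) →
      1 - t ≤ (1/3 : ℝ)^n := by
    intro n
    induction n with
    | zero => intro k t ht _; simpa using ht.1
    | succ n ih =>
        intro k t ht h
        rw [G_rec hμ k ht] at h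
        split_ifs at h with h1 h2
        · exfalso
          have hm := G_mem hμ (k+1) (⟨by linarith [ht.1], by linarith⟩ : 3*t ∈ Icc (0:ℝ) 1)
          have h5 := F0_strip (hμ k).1 hm
          rw [h] at h5
          simp at h5
          linarith [(hμ k).2]
        · exfalso
          have : (sg (μ k) (3*t-1)).2 = 0 := by rw [h]
          simp only [sg] at this
          linarith [(hμ k).1]
        · have h3 : G (μ := μ) (k+1) (3*t-2) = (1, 0) := F1_inj (hμ k).1 (by rw [h, F1_b])
          have h4 := ih (k+1) (3*t-2) ⟨by linarith, by linarith [ht.2]⟩ h3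
          rw [pow_succ]
          linarith
  have h0 : 1 - t ≤ 0 := by
    have hlim : Tendsto (fun n : ℕ => (1/3 : ℝ)^n) atTop (𝓝 0) :=
      tendsto_pow_atTop_nhds_zero_of_lt_one (by norm_num) (by norm_num)
    exact ge_of_tendsto hlim (Filter.Eventually.of_forall fun n => key n k t ht h)
  linarith [ht.2]

omit hμ in
lemma fm_absurd {c : ℝ} (hc0 : 0 < c) (hc1 : c < 1) {P : ℝ × ℝ} (hP : P ∈ T)
    {u : ℝ} (hu : 0 < u) (h : F0 c P = sg c u) : False := by
  have h5 := F0_strip hc0 hP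
  rw [h] at h5
  simp only [sg] at h5
  nlinarith

omit hμ in
lemma ft_absurd {c : ℝ} (hc0 : 0 < c) (hc1 : c < 1) {P Q : ℝ × ℝ} (hP : P ∈ T) (hQ : Q ∈ T)
    (h : F0 c P = F1 c Q) : False := by
  have h5 := F0_strip hc0 hP
  have h6 := F1_strip hc0 hQ
  rw [h] at h5
  linarith

omit hμ in
lemma mt_eq {c : ℝ} (hc0 : 0 < c) (hc1 : c < 1) {Q : ℝ × ℝ} (hQ : Q ∈ T)
    {u : ℝ} (hu : u ≤ 1) (h : sg c u = F1 c Q) : Q = (0, 0) ∧ u = 1 := by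
  have h6 := F1_strip hc0 hQ
  rw [← h] at h6
  simp only [sg] at h6
  have hu1 : u = 1 := by nlinarith
  subst hu1
  rw [sg_one, ← F1_a] at h
  exact ⟨(F1_inj hc0 h).symm, rfl⟩

lemma G_injOn (k : ℕ) : InjOn (G (μ := μ) k) (Icc (0:ℝ) 1) := by
  have key : ∀ n : ℕ, ∀ k : ℕ, ∀ s t : ℝ, s ∈ Icc (0:ℝ) 1 → t ∈ Icc (0:ℝ) 1 →
      G (μ := μ) k s = G (μ := μ) k t → |s - t| ≤ (1/3 : ℝ)^n := by
    intro n
    induction n with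
    | zero =>
        intro k s t hs ht _
        rw [abs_le]
        constructor
        · simp only [pow_zero]
          linarith [hs.1, ht.2]
        · simp only [pow_zero]
          linarith [hs.2, ht.1]
    | succ n ih =>
        intro k s t hs ht h
        have c0 := (hμ k).1
        have c1 := (hμ k).2
        have habs : ∀ u v : ℝ, |3*u - 3*v| = 3 * |u - v| := by
          intro u v
          rw [show 3*u-3*v = 3*(u-v) by ring, abs_mul,
            abs_of_nonneg (by norm_num : (0:ℝ) ≤ 3)]
        rw [G_rec hμ k hs, G_rec hμ k ht] at h
        have hsI : ∀ x : ℝ, 0 ≤ x → 3*x ≤ 1 → 3*x ∈ Icc (0:ℝ) 1 :=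
          fun x h1 h2 => ⟨by linarith, by linarith⟩
        have hmI : ∀ x : ℝ, x ≤ 1 → ¬(3*x ≤ 2) → 3*x - 2 ∈ Icc (0:ℝ) 1 :=
          fun x h1 h2 => ⟨by push_neg at h2; linarith, by linarith⟩
        by_cases hsA : 3*s ≤ 1 <;> by_cases htA : 3*t ≤ 1
        · -- first, first
          rw [if_pos hsA, if_pos htA] at h
          have h4 := ih (k+1) (3*s) (3*t) (hsI s hs.1 hsA) (hsI t ht.1 htA) (F0_inj c0 h)
          rw [habs] at h4
          rw [pow_succ]
          linarith
        · by_cases htB : 3*t ≤ 2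
          · -- first, middle
            rw [if_pos hsA, if_neg htA, if_pos htB] at h
            exact (fm_absurd c0 c1 (G_mem hμ (k+1) (hsI s hs.1 hsA))
              (show (0:ℝ) < 3*t-1 by push_neg at htA; linarith) h).elim
          · -- first, third
            rw [if_pos hsA, if_neg htA, if_neg htB] at h
            exact (ft_absurd c0 c1 (G_mem hμ (k+1) (hsI s hs.1 hsA))
              (G_mem hμ (k+1) (hmI t ht.2 htB)) h).elim
        · by_cases hsB : 3*s ≤ 2
          · -- middle, first
            rw [if_neg hsA, if_pos hsB, if_pos htA] at h
            exact (fm_absurd c0 c1 (G_mem hμ (k+1) (hsI t ht.1 htA))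
              (show (0:ℝ) < 3*s-1 by push_neg at hsA; linarith) h.symm).elim
          · -- third, first
            rw [if_neg hsA, if_neg hsB, if_pos htA] at h
            exact (ft_absurd c0 c1 (G_mem hμ (k+1) (hsI t ht.1 htA))
              (G_mem hμ (k+1) (hmI s hs.2 hsB)) h.symm).elim
        · by_cases hsB : 3*s ≤ 2 <;> by_cases htB : 3*t ≤ 2
          · -- middle, middle
            rw [if_neg hsA, if_pos hsB, if_neg htA, if_pos htB] at h
            have : (sg (μ k) (3*s-1)).1 = (sg (μ k) (3*t-1)).1 := by rw [h]
            simp only [sg] at this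
            have hst : s = t := by nlinarith
            rw [hst, sub_self, abs_zero]
            positivity
          · -- middle, third
            rw [if_neg hsA, if_pos hsB, if_neg htA, if_neg htB] at h
            obtain ⟨hQ, hu⟩ := mt_eq c0 c1 (G_mem hμ (k+1) (hmI t ht.2 htB))
              (show 3*s-1 ≤ 1 by linarith) h
            have h8 := G_eq_zero hμ (k+1) (hmI t ht.2 htB) hQ
            push_neg at htB
            linarith
          · -- third, middle
            rw [if_neg hsA, if_neg hsB, if_neg htA, if_pos htB] at h
            obtain ⟨hQ, hu⟩ := mt_eq c0 c1 (G_mem hμ (k+1) (hmI s hs.2 hsB))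
              (show 3*t-1 ≤ 1 by linarith) h.symm
            have h8 := G_eq_zero hμ (k+1) (hmI s hs.2 hsB) hQ
            push_neg at hsB
            linarith
          · -- third, third
            rw [if_neg hsA, if_neg hsB, if_neg htA, if_neg htB] at h
            have h4 := ih (k+1) (3*s-2) (3*t-2) (hmI s hs.2 hsB) (hmI t ht.2 htB)
              (F1_inj c0 h)
            have e : |(3*s-2) - (3*t-2)| = |3*s - 3*t| := by ring_nf
            rw [e, habs] at h4
            rw [pow_succ]
            linarith
  intro s hs t ht h
  have h0 : |s - t| ≤ 0 := by
    have hlim : Tendsto (fun n : ℕ => (1/3 : ℝ)^n) atTop (𝓝 0) :=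
      tendsto_pow_atTop_nhds_zero_of_lt_one (by norm_num) (by norm_num)
    exact ge_of_tendsto hlim (Filter.Eventually.of_forall fun n => key n k s t hs ht h)
  have h1 := abs_nonneg (s - t)
  have h2 := abs_eq_zero.mp (le_antisymm h0 h1)
  linarith

/-! ### The approximating sets and their measures -/

variable (μ) in
def DS : ℕ → ℕ → Set (ℝ × ℝ)
  | 0 => fun _ => T
  | (n+1) => fun k =>
      (F0 (μ k) '' DS n (k+1)) ∪ (sg (μ k) '' Icc 0 1) ∪ (F1 (μ k) '' DS n (k+1))

omit hμ in
lemma DS_sub_T (hμ : ∀ j, 0 < μ j ∧ μ j < 1) : ∀ n k, DS μ n k ⊆ T := by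
  intro n
  induction n with
  | zero => intro k; exact le_refl _
  | succ n ih =>
      intro k x hx
      rcases hx with (⟨y, hy, rfl⟩ | ⟨u, hu, rfl⟩) | ⟨y, hy, rfl⟩
      · exact F0_mem (hμ k).1 (hμ k).2 (ih (k+1) hy)
      · exact sg_mem (hμ k).1 (hμ k).2 hu
      · exact F1_mem (hμ k).1 (hμ k).2 (ih (k+1) hy)

lemma image_sub_DS (n : ℕ) : ∀ k, G (μ := μ) k '' Icc (0:ℝ) 1 ⊆ DS μ n k := by
  induction n with
  | zero =>
      rintro k x ⟨t, ht, rfl⟩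
      exact G_mem hμ k ht
  | succ n ih =>
      rintro k x ⟨t, ht, rfl⟩
      rw [G_rec hμ k ht]
      split_ifs with h1 h2
      · exact Or.inl (Or.inl ⟨_, ih (k+1) ⟨_, ⟨by linarith [ht.1], by linarith⟩, rfl⟩, rfl⟩)
      · push_neg at h1
        exact Or.inl (Or.inr ⟨3*t-1, ⟨by linarith, by linarith⟩, rfl⟩)
      · push_neg at h1 h2
        exact Or.inr ⟨_, ih (k+1) ⟨_, ⟨by linarith, by linarith [ht.2]⟩, rfl⟩, rfl⟩

lemma G_third0 (k : ℕ) {s : ℝ} (hs : s ∈ Icc (0:ℝ) 1) :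
    G (μ := μ) k (s/3) = F0 (μ k) (G (μ := μ) (k+1) s) := by
  have h1 : s/3 ∈ Icc (0:ℝ) 1 := ⟨by linarith [hs.1], by linarith [hs.2]⟩
  rw [G_rec hμ k h1, if_pos (by linarith [hs.2] : 3*(s/3) ≤ 1),
    show 3*(s/3) = s by ring]

lemma G_third1 (k : ℕ) {u : ℝ} (hu : u ∈ Icc (0:ℝ) 1) :
    G (μ := μ) k ((u+1)/3) = sg (μ k) u := by
  have h1 : (u+1)/3 ∈ Icc (0:ℝ) 1 := ⟨by linarith [hu.1], by linarith [hu.2]⟩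
  rw [G_rec hμ k h1]
  rcases eq_or_lt_of_le hu.1 with h0 | h0
  · rw [if_pos (by linarith [hu.1] : 3*((u+1)/3) ≤ 1)]
    rw [show 3*((u+1)/3) = u + 1 by ring, ← h0]
    norm_num [G_one, F0_b, sg_zero]
  · rw [if_neg (by push_neg; linarith : ¬ 3*((u+1)/3) ≤ 1),
      if_pos (by linarith [hu.2] : 3*((u+1)/3) ≤ 2),
      show 3*((u+1)/3) - 1 = u by ring]

lemma G_third2 (k : ℕ) {s : ℝ} (hs : s ∈ Icc (0:ℝ) 1) :
    G (μ := μ) k ((s+2)/3) = F1 (μ k) (G (μ := μ) (k+1) s) := by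
  have h1 : (s+2)/3 ∈ Icc (0:ℝ) 1 := ⟨by linarith [hs.1], by linarith [hs.2]⟩
  rw [G_rec hμ k h1]
  rcases eq_or_lt_of_le hs.1 with h0 | h0
  · rw [if_neg (by push_neg; linarith : ¬ 3*((s+2)/3) ≤ 1),
      if_pos (by linarith [hs.1] : 3*((s+2)/3) ≤ 2)]
    rw [show 3*((s+2)/3) - 1 = s + 1 by ring, ← h0,
      show (0:ℝ)+1 = 1 by norm_num, sg_one, G_zero, F1_a]
  · rw [if_neg (by push_neg; linarith : ¬ 3*((s+2)/3) ≤ 1),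
      if_neg (by push_neg; linarith : ¬ 3*((s+2)/3) ≤ 2),
      show 3*((s+2)/3) - 2 = s by ring]

lemma DS_approx (n : ℕ) : ∀ k, ∀ x ∈ DS μ n k, ∃ t ∈ Icc (0:ℝ) 1,
    dE x (G (μ := μ) k t) ≤ 2 * (4/5)^n := by
  induction n with
  | zero =>
      intro k x hx
      refine ⟨0, ⟨le_refl _, by norm_num⟩, ?_⟩
      rw [G_zero]
      simpa using dE_le_two hx (⟨le_refl _, le_refl _, by norm_num⟩ : ((0:ℝ),(0:ℝ)) ∈ T)
  | succ n ih =>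
      intro k x hx
      rcases hx with (⟨y, hy, rfl⟩ | ⟨u, hu, rfl⟩) | ⟨y, hy, rfl⟩
      · obtain ⟨t, ht, hd⟩ := ih (k+1) y hy
        refine ⟨t/3, ⟨by linarith [ht.1], by linarith [ht.2]⟩, ?_⟩
        rw [G_third0 hμ k ht]
        calc dE (F0 (μ k) y) (F0 (μ k) (G (μ := μ) (k+1) t))
            ≤ 4/5 * dE y (G (μ := μ) (k+1) t) := dE_F0 (hμ k).1 (hμ k).2 _ _
          _ ≤ 2 * (4/5)^(n+1) := by rw [pow_succ]; nlinarith
      · refine ⟨(u+1)/3, ⟨by linarith [hu.1], by linarith [hu.2]⟩, ?_⟩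
        rw [G_third1 hμ k hu, dE_self]
        positivity
      · obtain ⟨t, ht, hd⟩ := ih (k+1) y hy
        refine ⟨(t+2)/3, ⟨by linarith [ht.1], by linarith [ht.2]⟩, ?_⟩
        rw [G_third2 hμ k ht]
        calc dE (F1 (μ k) y) (F1 (μ k) (G (μ := μ) (k+1) t))
            ≤ 4/5 * dE y (G (μ := μ) (k+1) t) := dE_F1 (hμ k).1 (hμ k).2 _ _
          _ ≤ 2 * (4/5)^(n+1) := by rw [pow_succ]; nlinarith

lemma image_compact (k : ℕ) : IsCompact (G (μ := μ) k '' Icc (0:ℝ) 1) :=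
  isCompact_Icc.image_of_continuousOn (G_cont hμ k)

lemma image_eq_iInter (k : ℕ) : G (μ := μ) k '' Icc (0:ℝ) 1 = ⋂ n, DS μ n k := by
  apply Subset.antisymm
  · exact subset_iInter fun n => image_sub_DS hμ n k
  · intro x hx
    rw [mem_iInter] at hx
    have hcl : IsClosed (G (μ := μ) k '' Icc (0:ℝ) 1) := (image_compact hμ k).isClosed
    rw [← hcl.closure_eq]
    rw [Metric.mem_closure_iff]
    intro ε hε
    have hr : Tendsto (fun n : ℕ => (2:ℝ) * (4/5)^n) atTop (𝓝 0) := by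
      rw [show (0:ℝ) = 2 * 0 by ring]
      exact (tendsto_pow_atTop_nhds_zero_of_lt_one (by norm_num) (by norm_num)).const_mul 2
    obtain ⟨n, hn⟩ := (hr.eventually (eventually_lt_nhds hε)).exists
    obtain ⟨t, ht, hd⟩ := DS_approx hμ n k x (hx n)
    exact ⟨G (μ := μ) k t, ⟨t, ht, rfl⟩, lt_of_le_of_lt ((dist_le_dE _ _).trans hd) hn⟩

omit hμ in
lemma isCompact_T : IsCompact T := by
  apply IsCompact.of_isClosed_subset
    ((isCompact_Icc (a := (0:ℝ)) (b := 1)).prod (isCompact_Icc (a := (0:ℝ)) (b := 1))) isClosed_T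
  intro p ⟨h1, h2, h3⟩
  exact ⟨⟨by linarith, by linarith⟩, ⟨by linarith, by linarith⟩⟩

lemma DS_compact (n : ℕ) : ∀ k, IsCompact (DS μ n k) := by
  induction n with
  | zero => intro k; exact isCompact_T
  | succ n ih =>
      intro k
      exact (((ih (k+1)).image continuous_F0).union
        (isCompact_Icc.image continuous_sg)).union ((ih (k+1)).image continuous_F1)

lemma DS_antitone (k : ℕ) : Antitone (fun n => DS μ n k) := by
  have key : ∀ n k, DS μ (n+1) k ⊆ DS μ n k := by
    intro n
    induction n with
    | zero =>
        intro k x hx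
        exact DS_sub_T hμ (0+1) k hx
    | succ n ih =>
        intro k x hx
        rcases hx with (⟨y, hy, rfl⟩ | ⟨u, hu, rfl⟩) | ⟨y, hy, rfl⟩
        · exact Or.inl (Or.inl ⟨y, ih (k+1) hy, rfl⟩)
        · exact Or.inl (Or.inr ⟨u, hu, rfl⟩)
        · exact Or.inr ⟨y, ih (k+1) hy, rfl⟩
  exact antitone_nat_of_succ_le fun n => key n k

/-! ### Volume computations -/

omit hμ in
lemma det_prod_linear (f : (ℝ × ℝ) →ₗ[ℝ] (ℝ × ℝ)) :
    LinearMap.det f = (f (1,0)).1 * (f (0,1)).2 - (f (0,1)).1 * (f (1,0)).2 := by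
  rw [← LinearMap.det_toMatrix (Module.Basis.finTwoProd ℝ) f, Matrix.det_fin_two]
  simp [LinearMap.toMatrix_apply, Module.Basis.finTwoProd_zero, Module.Basis.finTwoProd_one,
    Module.Basis.coe_finTwoProd_repr]

variable (μ) in
def L0 (c : ℝ) : (ℝ × ℝ) →ₗ[ℝ] (ℝ × ℝ) where
  toFun p := (c/2*(p.1+p.2), c/2*(p.1-p.2))
  map_add' p q := by
    apply Prod.ext <;> simp <;> ring
  map_smul' r p := by
    apply Prod.ext <;> simp <;> ring

variable (μ) in
def L1 (c : ℝ) : (ℝ × ℝ) →ₗ[ℝ] (ℝ × ℝ) where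
  toFun p := (c/2*(p.1-p.2), -(c/2)*(p.1+p.2))
  map_add' p q := by
    apply Prod.ext <;> simp <;> ring
  map_smul' r p := by
    apply Prod.ext <;> simp <;> ring

omit hμ in
lemma vol_translate (v : ℝ × ℝ) (S : Set (ℝ × ℝ)) :
    volume ((fun x => v + x) '' S) = volume S := by
  have h : ((fun x => v + x) '' S) = (fun x => (-v) + x) ⁻¹' S := by
    ext y
    simp only [Set.mem_image, Set.mem_preimage]
    constructor
    · rintro ⟨x, hx, rfl⟩
      simpa using hx
    · intro hy
      exact ⟨-v + y, hy, by abel⟩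
  rw [h, measure_preimage_add]

omit hμ in
lemma vol_F0_image (c : ℝ) (S : Set (ℝ × ℝ)) :
    volume (F0 c '' S) = ENNReal.ofReal (c^2/2) * volume S := by
  have hF : F0 c = ⇑(L0 c) := rfl
  rw [hF, Measure.addHaar_image_linearMap]
  congr 2
  rw [det_prod_linear]
  show |c/2*(1+0) * (c/2*(0-1)) - c/2*(0+1) * (c/2*(1-0))| = c^2/2
  rw [show c/2*(1+0) * (c/2*(0-1)) - c/2*(0+1) * (c/2*(1-0)) = -(c^2/2) by ring, abs_neg,
    abs_of_nonneg (by positivity)]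

omit hμ in
lemma vol_F1_image (c : ℝ) (S : Set (ℝ × ℝ)) :
    volume (F1 c '' S) = ENNReal.ofReal (c^2/2) * volume S := by
  have hd : F1 c '' S = (fun x => (1-c/2, c/2) + x) '' (⇑(L1 c) '' S) := by
    rw [Set.image_image]
    apply image_congr
    intro p _
    apply Prod.ext
    · show (F1 c p).1 = 1 - c/2 + (c/2*(p.1-p.2))
      simp only [F1]; ring
    · show (F1 c p).2 = c/2 + (-(c/2)*(p.1+p.2))
      simp only [F1]; ring
  rw [hd, vol_translate, Measure.addHaar_image_linearMap]
  congr 2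
  rw [det_prod_linear]
  show |c/2*(1-0) * (-(c/2)*(0+1)) - c/2*(0-1) * (-(c/2)*(1+0))| = c^2/2
  rw [show c/2*(1-0) * (-(c/2)*(0+1)) - c/2*(0-1) * (-(c/2)*(1+0)) = -(c^2/2) by ring, abs_neg,
    abs_of_nonneg (by positivity)]

variable (μ) in
def horiz : Submodule ℝ (ℝ × ℝ) where
  carrier := {p | p.2 = 0}
  add_mem' := by intro a b ha hb; simp_all
  zero_mem' := by simp
  smul_mem' := by intro r p hp; simp_all

variable (μ) in
def antiDiag : Submodule ℝ (ℝ × ℝ) where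
  carrier := {p | p.1 + p.2 = 0}
  add_mem' := by
    intro a b ha hb
    simp only [Set.mem_setOf_eq, Prod.fst_add, Prod.snd_add] at *
    linarith
  zero_mem' := by simp
  smul_mem' := by
    intro r p hp
    have h : p.1 + p.2 = 0 := hp
    show (r • p).1 + (r • p).2 = 0
    simp only [Prod.smul_fst, Prod.smul_snd, smul_eq_mul]
    linear_combination r * h

omit hμ in
lemma vol_horiz_line (a : ℝ) : volume {p : ℝ × ℝ | p.2 = a} = 0 := by
  have h : {p : ℝ × ℝ | p.2 = a} = (fun x => ((0:ℝ), a) + x) '' (horiz : Set (ℝ × ℝ)) := by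
    ext p
    simp only [Set.mem_setOf_eq, Set.mem_image]
    constructor
    · intro hp
      exact ⟨(p.1, 0), rfl, by apply Prod.ext <;> simp [hp]⟩
    · rintro ⟨q, hq, rfl⟩
      have : q.2 = 0 := hq
      simp [this]
  rw [h, vol_translate]
  apply Measure.addHaar_submodule
  intro htop
  have : ((0:ℝ), (1:ℝ)) ∈ horiz := htop ▸ Submodule.mem_top
  have : (1:ℝ) = 0 := this
  norm_num at this

omit hμ in
lemma vol_antiDiag_line : volume {p : ℝ × ℝ | p.1 + p.2 = 1} = 0 := by
  have h : {p : ℝ × ℝ | p.1 + p.2 = 1} =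
      (fun x => ((0:ℝ), (1:ℝ)) + x) '' (antiDiag : Set (ℝ × ℝ)) := by
    ext p
    simp only [Set.mem_setOf_eq, Set.mem_image]
    constructor
    · intro hp
      refine ⟨(p.1, p.2 - 1), by show p.1 + (p.2 - 1) = 0; linarith, by apply Prod.ext <;> simp⟩
    · rintro ⟨q, hq, rfl⟩
      have : q.1 + q.2 = 0 := hq
      simp only [Prod.fst_add, Prod.snd_add]
      linarith
  rw [h, vol_translate]
  apply Measure.addHaar_submodule
  intro htop
  have : ((1:ℝ), (0:ℝ)) ∈ antiDiag := htop ▸ Submodule.mem_top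
  have : (1:ℝ) + 0 = 0 := this
  norm_num at this

omit hμ in
lemma vol_sg_image (c : ℝ) : volume (sg c '' Icc (0:ℝ) 1) = 0 := by
  apply measure_mono_null _ (vol_horiz_line (c/2))
  rintro x ⟨u, _, rfl⟩
  rfl

variable (μ) in
def TA : (ℝ × ℝ) →ₗ[ℝ] (ℝ × ℝ) where
  toFun p := (2*p.2, p.1 - p.2)
  map_add' p q := by apply Prod.ext <;> simp <;> ring
  map_smul' r p := by apply Prod.ext <;> simp <;> ring

variable (μ) in
def LB : (ℝ × ℝ) →ₗ[ℝ] (ℝ × ℝ) where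
  toFun p := (p.1 + p.2, -(2*p.2))
  map_add' p q := by apply Prod.ext <;> simp <;> ring
  map_smul' r p := by apply Prod.ext <;> simp <;> ring

omit hμ in
lemma TA_image : ⇑TA '' T = {p : ℝ × ℝ | 0 ≤ p.1 ∧ 0 ≤ p.2 ∧ p.1 + p.2 ≤ 1} := by
  ext p
  constructor
  · rintro ⟨q, ⟨h1, h2, h3⟩, rfl⟩
    refine ⟨by show (0:ℝ) ≤ 2*q.2; linarith, by show (0:ℝ) ≤ q.1 - q.2; linarith, ?_⟩
    show 2*q.2 + (q.1 - q.2) ≤ 1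
    linarith
  · rintro ⟨h1, h2, h3⟩
    refine ⟨(p.2 + p.1/2, p.1/2), ⟨by simp; linarith, by simp; linarith, by simp; linarith⟩, ?_⟩
    apply Prod.ext
    · show 2*(p.1/2) = p.1; ring
    · show (p.2 + p.1/2) - p.1/2 = p.2; ring

omit hμ in
lemma TB_image : (fun p : ℝ × ℝ => (p.1 + p.2, 1 - 2*p.2)) '' T =
    {p : ℝ × ℝ | p.1 ≤ 1 ∧ p.2 ≤ 1 ∧ 1 ≤ p.1 + p.2} := by
  ext p
  constructor
  · rintro ⟨q, ⟨h1, h2, h3⟩, rfl⟩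
    refine ⟨by show q.1 + q.2 ≤ 1; linarith, by show 1 - 2*q.2 ≤ 1; linarith, ?_⟩
    show (1:ℝ) ≤ (q.1 + q.2) + (1 - 2*q.2)
    linarith
  · rintro ⟨h1, h2, h3⟩
    refine ⟨(p.1 - (1-p.2)/2, (1-p.2)/2), ⟨by simp; linarith, by simp; linarith,
      by simp; linarith⟩, ?_⟩
    apply Prod.ext
    · show (p.1 - (1-p.2)/2) + (1-p.2)/2 = p.1; ring
    · show 1 - 2*((1-p.2)/2) = p.2; ring

omit hμ in
lemma T_subset_square : T ⊆ Icc (0:ℝ) 1 ×ˢ Icc (0:ℝ) 1 := by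
  rintro p ⟨h1, h2, h3⟩
  exact ⟨⟨by linarith, by linarith⟩, ⟨by linarith, by linarith⟩⟩

omit hμ in
lemma vol_union_null {X B : Set (ℝ × ℝ)} (hB : volume B = 0) :
    volume (X ∪ B) = volume X := by
  apply le_antisymm
  · calc volume (X ∪ B) ≤ volume X + volume B := measure_union_le _ _
      _ = volume X := by rw [hB, add_zero]
  · exact measure_mono subset_union_left

omit hμ in
lemma vol_T : volume T = ENNReal.ofReal (1/4) := by
  have hAvol : volume (⇑TA '' T) = ENNReal.ofReal 2 * volume T := by
    rw [Measure.addHaar_image_linearMap]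
    congr 2
    rw [det_prod_linear]
    show |2*(0:ℝ) * ((0:ℝ) - 1) - 2*1 * ((1:ℝ) - 0)| = 2
    norm_num
  have hBvol : volume ((fun p : ℝ × ℝ => (p.1 + p.2, 1 - 2*p.2)) '' T)
      = ENNReal.ofReal 2 * volume T := by
    have hd : (fun p : ℝ × ℝ => (p.1 + p.2, 1 - 2*p.2)) '' T =
        (fun x => ((0:ℝ), (1:ℝ)) + x) '' (⇑LB '' T) := by
      rw [Set.image_image]
      apply image_congr
      intro p _
      apply Prod.ext
      · show p.1 + p.2 = 0 + (p.1 + p.2); ring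
      · show 1 - 2*p.2 = 1 + -(2*p.2); ring
    rw [hd, vol_translate, Measure.addHaar_image_linearMap]
    congr 2
    rw [det_prod_linear]
    show |((1:ℝ)+0) * (-(2*(1:ℝ))) - ((0:ℝ)+1) * (-(2*(0:ℝ)))| = 2
    norm_num
  have hunion : (⇑TA '' T) ∪ ((fun p : ℝ × ℝ => (p.1 + p.2, 1 - 2*p.2)) '' T)
      = Icc (0:ℝ) 1 ×ˢ Icc (0:ℝ) 1 := by
    rw [TA_image, TB_image]
    ext p
    simp only [Set.mem_union, Set.mem_setOf_eq, Set.mem_prod, Set.mem_Icc]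
    constructor
    · rintro (⟨h1, h2, h3⟩ | ⟨h1, h2, h3⟩)
      · exact ⟨⟨by linarith, by linarith⟩, ⟨by linarith, by linarith⟩⟩
      · exact ⟨⟨by linarith, by linarith⟩, ⟨by linarith, by linarith⟩⟩
    · rintro ⟨⟨h1, h2⟩, ⟨h3, h4⟩⟩
      rcases le_or_gt (p.1 + p.2) 1 with h | h
      · exact Or.inl ⟨h1, h3, h⟩
      · exact Or.inr ⟨h2, h4, le_of_lt h⟩
  have hinter : volume ((⇑TA '' T) ∩ ((fun p : ℝ × ℝ => (p.1 + p.2, 1 - 2*p.2)) '' T)) = 0 := by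
    apply measure_mono_null _ vol_antiDiag_line
    rintro p ⟨hpA, hpB⟩
    rw [TA_image] at hpA
    rw [TB_image] at hpB
    exact le_antisymm hpA.2.2 hpB.2.2
  have hSBm : MeasurableSet ((fun p : ℝ × ℝ => (p.1 + p.2, 1 - 2*p.2)) '' T) :=
    ((isCompact_T.image (by fun_prop)).measurableSet)
  have hkey := measure_union_add_inter (μ := volume) (⇑TA '' T) hSBm
  rw [hinter, add_zero, hunion, hAvol, hBvol] at hkey
  have hsq : volume (Icc (0:ℝ) 1 ×ˢ Icc (0:ℝ) 1) = 1 := by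
    rw [Measure.volume_eq_prod, Measure.prod_prod, Real.volume_Icc]
    norm_num
  rw [hsq, ENNReal.ofReal_ofNat] at hkey
  have h4 : (4 : ℝ≥0∞) * volume T = 1 := by
    rw [show (4 : ℝ≥0∞) = 2 + 2 by norm_num, add_mul]
    exact hkey.symm
  have hquarter : ENNReal.ofReal (1/4 : ℝ) = 1/(4 : ℝ≥0∞) := by
    rw [show (1/4 : ℝ) = (4:ℝ)⁻¹ by norm_num, ENNReal.ofReal_inv_of_pos (by norm_num)]
    norm_num
  rw [hquarter, ENNReal.eq_div_iff (by norm_num) (by norm_num)]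
  exact h4

lemma vol_DS (n : ℕ) : ∀ k, volume (DS μ n k) =
    ENNReal.ofReal ((1/4) * ∏ j ∈ Finset.range n, (μ (k+j))^2) := by
  induction n with
  | zero =>
      intro k
      show volume T = _
      simpa using vol_T
  | succ n ih =>
      intro k
      have c0 := (hμ k).1
      have hTsub := DS_sub_T hμ n (k+1)
      have hdisj : Disjoint (F0 (μ k) '' DS μ n (k+1)) (F1 (μ k) '' DS μ n (k+1)) := by
        rw [Set.disjoint_left]
        rintro x ⟨y, hy, rfl⟩ ⟨z, hz, hzx⟩
        have h5 := F0_strip c0 (hTsub hy)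
        have h6 := F1_strip c0 (hTsub hz)
        rw [hzx] at h6
        linarith [(hμ k).2]
      have hmeas : MeasurableSet (F1 (μ k) '' DS μ n (k+1)) :=
        ((DS_compact hμ n (k+1)).image continuous_F1).measurableSet
      have step1 : volume (DS μ (n+1) k) =
          volume ((F0 (μ k) '' DS μ n (k+1)) ∪ (F1 (μ k) '' DS μ n (k+1))) := by
        show volume (_ ∪ _ ∪ _) = _
        rw [Set.union_right_comm]
        exact vol_union_null (vol_sg_image _)
      have hXn : (0:ℝ) ≤ (1/4) * ∏ j ∈ Finset.range n, (μ (k+1+j))^2 := by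
        apply mul_nonneg (by norm_num)
        apply Finset.prod_nonneg
        intro j _
        positivity
      rw [step1, measure_union hdisj hmeas, vol_F0_image, vol_F1_image, ih (k+1),
        ← ENNReal.ofReal_mul (by positivity), ← ENNReal.ofReal_add (by positivity)
          (mul_nonneg (by positivity) hXn)]
      congr 1
      have hprod : ∏ j ∈ Finset.range (n+1), (μ (k+j))^2
          = ((μ k)^2) * ∏ j ∈ Finset.range n, (μ (k+1+j))^2 := by
        rw [Finset.prod_range_succ']
        rw [Nat.add_zero, mul_comm]
        congr 1
        apply Finset.prod_congr rfl
        intro j _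
        rw [show k + (j+1) = k + 1 + j from by omega]
      rw [hprod]
      ring

lemma tendsto_vol_DS (k : ℕ) :
    Tendsto (fun n => volume (DS μ n k)) atTop (𝓝 (volume (G (μ := μ) k '' Icc (0:ℝ) 1))) := by
  rw [image_eq_iInter hμ k]
  exact tendsto_measure_iInter_atTop
    (fun n => ((DS_compact hμ n k).measurableSet).nullMeasurableSet)
    (DS_antitone hμ k) ⟨0, by rw [vol_DS hμ 0 k]; exact ENNReal.ofReal_ne_top⟩

end

/-! ### Specialization of the scale factors -/

/-- Scale factors with `∏ (mq q j)^2 = q`. -/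
noncomputable def mq (q : ℝ) (j : ℕ) : ℝ := q ^ ((2:ℝ)⁻¹ ^ (j+2) : ℝ)

lemma mq_mem {q : ℝ} (hq0 : 0 < q) (hq1 : q < 1) (j : ℕ) : 0 < mq q j ∧ mq q j < 1 :=
  ⟨Real.rpow_pos_of_pos hq0 _,
   Real.rpow_lt_one (le_of_lt hq0) hq1 (by positivity)⟩

lemma mq_prod {q : ℝ} (hq0 : 0 < q) (n : ℕ) :
    ∏ j ∈ Finset.range n, (mq q j)^2 = q ^ (1 - ((2:ℝ)⁻¹)^n : ℝ) := by
  induction n with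
  | zero => simp
  | succ n ih =>
      rw [Finset.prod_range_succ, ih]
      have h1 : (mq q n)^2 = q ^ (((2:ℝ)⁻¹)^(n+1) : ℝ) := by
        rw [mq, ← Real.rpow_natCast (q ^ ((2:ℝ)⁻¹ ^ (n+2) : ℝ)) 2, ← Real.rpow_mul
          (le_of_lt hq0)]
        congr 1
        push_cast
        ring
      rw [h1, ← Real.rpow_add hq0]
      congr 1
      have : ((2:ℝ)⁻¹)^(n+1) = ((2:ℝ)⁻¹)^n * 2⁻¹ := pow_succ _ _
      rw [this]
      ring

lemma mq_prod_tendsto {q : ℝ} (hq0 : 0 < q) :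
    Tendsto (fun n => ∏ j ∈ Finset.range n, (mq q j)^2) atTop (𝓝 q) := by
  have h1 : Tendsto (fun n : ℕ => (1 - ((2:ℝ)⁻¹)^n : ℝ)) atTop (𝓝 1) := by
    have := tendsto_const_nhds (α := ℕ) (x := (1:ℝ)) (f := atTop) |>.sub
      (tendsto_pow_atTop_nhds_zero_of_lt_one (r := (2:ℝ)⁻¹) (by norm_num) (by norm_num))
    simpa using this
  have h2 : ContinuousAt (fun y : ℝ => q ^ (y : ℝ)) 1 :=
    Real.continuousAt_const_rpow (ne_of_gt hq0)
  have h3 := h2.tendsto.comp h1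
  rw [Real.rpow_one] at h3
  have h4 : (fun n => ∏ j ∈ Finset.range n, (mq q j)^2)
      = (fun y : ℝ => q ^ (y : ℝ)) ∘ (fun n : ℕ => (1 - ((2:ℝ)⁻¹)^n : ℝ)) := by
    funext n
    exact mq_prod hq0 n
  rw [h4]
  exact h3

/-- The core construction: an injective arc from `(0,0)` to `(1,0)` inside the triangle `T`
with image of any prescribed measure `m < 1/4`. -/
theorem core_arc (m : ℝ) (hm : m ∈ Ioo (0:ℝ) (1/4)) :
    ∃ δ : ℝ → ℝ × ℝ, ContinuousOn δ (Icc 0 1) ∧ InjOn δ (Icc 0 1) ∧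
      (∀ t ∈ Icc (0:ℝ) 1, δ t ∈ T) ∧ δ 0 = (0, 0) ∧ δ 1 = (1, 0) ∧
      volume (δ '' Icc 0 1) = ENNReal.ofReal m := by
  obtain ⟨hm0, hm1⟩ := hm
  set q : ℝ := 4 * m with hq
  have hq0 : 0 < q := by rw [hq]; linarith
  have hq1 : q < 1 := by rw [hq]; linarith
  have hμ : ∀ j, 0 < mq q j ∧ mq q j < 1 := mq_mem hq0 hq1
  refine ⟨G (μ := mq q) 0, G_cont hμ 0, G_injOn hμ 0, fun t ht => G_mem hμ 0 ht,
    G_zero 0, G_one 0, ?_⟩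
  have h1 := tendsto_vol_DS hμ 0
  have h2 : Tendsto (fun n => volume (DS (mq q) n 0)) atTop (𝓝 (ENNReal.ofReal m)) := by
    have h3 : (fun n => volume (DS (mq q) n 0))
        = fun n => ENNReal.ofReal ((1/4) * ∏ j ∈ Finset.range n, (mq q j)^2) := by
      funext n
      rw [vol_DS hμ n 0]
      norm_num
    rw [h3]
    have h4 : Tendsto (fun n => (1/4 : ℝ) * ∏ j ∈ Finset.range n, (mq q j)^2) atTop
        (𝓝 ((1/4) * q)) := (mq_prod_tendsto hq0).const_mul _
    have h5 : (1/4 : ℝ) * q = m := by rw [hq]; ring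
    rw [h5] at h4
    exact (ENNReal.continuous_ofReal.tendsto m).comp h4
  exact tendsto_nhds_unique h1 h2

/-! ### Final assembly -/

/-- Linear map `(x,y) ↦ (2κy, x - κy)`: maps `T` onto the lower-left triangle of the square,
compressed towards the hypotenuse when `κ < 1`. -/
noncomputable def LA (κ : ℝ) : (ℝ × ℝ) →ₗ[ℝ] (ℝ × ℝ) where
  toFun p := (2*κ*p.2, p.1 - κ*p.2)
  map_add' p q := by apply Prod.ext <;> simp <;> ring
  map_smul' r p := by apply Prod.ext <;> simp <;> ring

lemma vol_LA_image {κ : ℝ} (hκ : 0 < κ) (S : Set (ℝ × ℝ)) :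
    volume (⇑(LA κ) '' S) = ENNReal.ofReal (2*κ) * volume S := by
  rw [Measure.addHaar_image_linearMap]
  congr 2
  rw [det_prod_linear]
  show |2*κ*(0:ℝ) * ((0:ℝ) - κ*1) - 2*κ*1 * ((1:ℝ) - κ*0)| = 2*κ
  rw [show 2*κ*(0:ℝ) * ((0:ℝ) - κ*1) - 2*κ*1 * ((1:ℝ) - κ*0) = -(2*κ) by ring, abs_neg,
    abs_of_nonneg (by positivity)]

/-- The affine map `(x,y) ↦ (x+y, 1-2y)`: maps `T` onto the upper-right triangle. -/
def PhiB (p : ℝ × ℝ) : ℝ × ℝ := (p.1 + p.2, 1 - 2*p.2)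

lemma vol_PhiB_image (S : Set (ℝ × ℝ)) :
    volume (PhiB '' S) = ENNReal.ofReal 2 * volume S := by
  have hd : PhiB '' S = (fun x => ((0:ℝ), (1:ℝ)) + x) '' (⇑LB '' S) := by
    rw [Set.image_image]
    apply image_congr
    intro p _
    apply Prod.ext
    · show p.1 + p.2 = 0 + (p.1 + p.2); ring
    · show 1 - 2*p.2 = 1 + -(2*p.2); ring
  rw [hd, vol_translate, Measure.addHaar_image_linearMap]
  congr 2
  rw [det_prod_linear]
  show |((1:ℝ)+0) * (-(2*(1:ℝ))) - ((0:ℝ)+1) * (-(2*(0:ℝ)))| = 2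
  norm_num

lemma LA_inj {κ : ℝ} (hκ : 0 < κ) {p q : ℝ × ℝ} (h : LA κ p = LA κ q) : p = q := by
  have h1 : 2*κ*p.2 = 2*κ*q.2 := congrArg Prod.fst h
  have h2 : p.1 - κ*p.2 = q.1 - κ*q.2 := congrArg Prod.snd h
  have e2 : p.2 = q.2 := by nlinarith
  have e1 : p.1 = q.1 := by nlinarith
  exact Prod.ext e1 e2

lemma PhiB_inj {p q : ℝ × ℝ} (h : PhiB p = PhiB q) : p = q := by
  have h1 : p.1 + p.2 = q.1 + q.2 := congrArg Prod.fst h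
  have h2 : 1 - 2*p.2 = 1 - 2*q.2 := congrArg Prod.snd h
  have e2 : p.2 = q.2 := by nlinarith
  have e1 : p.1 = q.1 := by nlinarith
  exact Prod.ext e1 e2

/-- Points of `LA κ '' T` satisfy the lower-triangle inequalities. -/
lemma LA_mem {κ : ℝ} (hκ0 : 0 < κ) (hκ1 : κ ≤ 1) {p : ℝ × ℝ} (hp : p ∈ T) :
    0 ≤ (LA κ p).1 ∧ 0 ≤ (LA κ p).2 ∧ (LA κ p).1 + (LA κ p).2 ≤ 1 := by
  obtain ⟨h1, h2, h3⟩ := hp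
  refine ⟨?_, ?_, ?_⟩
  · show (0:ℝ) ≤ 2*κ*p.2; positivity
  · show (0:ℝ) ≤ p.1 - κ*p.2; nlinarith
  · show 2*κ*p.2 + (p.1 - κ*p.2) ≤ 1; nlinarith

lemma PhiB_mem {p : ℝ × ℝ} (hp : p ∈ T) :
    (PhiB p).1 ≤ 1 ∧ (PhiB p).2 ≤ 1 ∧ 1 ≤ (PhiB p).1 + (PhiB p).2 := by
  obtain ⟨h1, h2, h3⟩ := hp
  refine ⟨?_, ?_, ?_⟩
  · show p.1 + p.2 ≤ 1; linarith
  · show 1 - 2*p.2 ≤ 1; linarith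
  · show (1:ℝ) ≤ (p.1 + p.2) + (1 - 2*p.2); linarith

/-- Key separation fact: a compressed lower arc point lying in the closed upper triangle
must be the corner `(0,1)`. -/
lemma LA_corner {κ : ℝ} (hκ0 : 0 < κ) (hκ1 : κ < 1) {p : ℝ × ℝ} (hp : p ∈ T)
    (h : 1 ≤ (LA κ p).1 + (LA κ p).2) : p = (1, 0) := by
  obtain ⟨h1, h2, h3⟩ := hp
  have hh : (1:ℝ) ≤ 2*κ*p.2 + (p.1 - κ*p.2) := h
  have hy : p.2 = 0 := by nlinarith
  have hx : p.1 = 1 := by nlinarith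
  exact Prod.ext hx hy

end LanceThomas

open LanceThomas

/-- Lance–Thomas: for every `β ∈ (0,1)` there is a continuous injective curve in the
unit square joining `(0,0)` to `(1,1)` whose image has measure exactly `β`. -/
theorem exists_lance_thomas_curve :
    ∀ β : ℝ, β ∈ Ioo (0 : ℝ) 1 →
      ∃ γ : ℝ → ℝ × ℝ,
        ContinuousOn γ (Icc 0 1) ∧
        InjOn γ (Icc 0 1) ∧
        γ '' Icc 0 1 ⊆ Icc (0 : ℝ) 1 ×ˢ Icc (0 : ℝ) 1 ∧
        γ 0 = (0, 0) ∧
        γ 1 = (1, 1) ∧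
        volume (γ '' Icc 0 1) = ENNReal.ofReal β := by
  intro β hβ
  obtain ⟨hβ0, hβ1⟩ := hβ
  have hβ1' : (0:ℝ) < 1 + β := by linarith
  set m₁ : ℝ := (1+β)/8 with hm₁
  set κ : ℝ := 2*β/(1+β) with hκdef
  set m₂ : ℝ := β/4 with hm₂
  have hκ0 : 0 < κ := by rw [hκdef]; positivity
  have hκ1 : κ < 1 := by rw [hκdef, div_lt_one hβ1']; linarith
  obtain ⟨δ₁, hc1, hi1, hT1, h01, h11, hv1⟩ :=
    core_arc m₁ ⟨by rw [hm₁]; positivity, by rw [hm₁]; linarith⟩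
  obtain ⟨δ₂, hc2, hi2, hT2, h02, h12, hv2⟩ :=
    core_arc m₂ ⟨by rw [hm₂]; positivity, by rw [hm₂]; linarith⟩
  -- clamping function
  set cl : ℝ → ℝ := fun t => max 0 (min 1 t) with hcl
  have hcl_cont : Continuous cl := by
    rw [hcl]; fun_prop
  have hcl_mem : ∀ t, cl t ∈ Icc (0:ℝ) 1 :=
    fun t => ⟨le_max_left _ _, max_le (by norm_num) (min_le_left _ _)⟩
  have hcl_id : ∀ t ∈ Icc (0:ℝ) 1, cl t = t := by
    intro t ht
    rw [hcl]
    simp only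
    rw [min_eq_right ht.2, max_eq_right ht.1]
  -- the two halves
  set f : ℝ → ℝ × ℝ := fun t => LA κ (δ₁ (cl (2*t))) with hf
  set g : ℝ → ℝ × ℝ := fun t => PhiB (δ₂ (cl (2*t - 1))) with hg
  have hPhiB_cont : Continuous PhiB := by unfold PhiB; fun_prop
  have hLA_cont : Continuous ⇑(LA κ) := (LA κ).continuous_of_finiteDimensional
  have hf_cont : Continuous f := by
    rw [hf]
    exact hLA_cont.comp (hc1.comp_continuous (hcl_cont.comp (by fun_prop))
      (fun x => hcl_mem _))
  have hg_cont : Continuous g := by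
    rw [hg]
    exact hPhiB_cont.comp (hc2.comp_continuous (hcl_cont.comp (by fun_prop))
      (fun x => hcl_mem _))
  -- values at the gluing point
  have hLA10 : LA κ ((1:ℝ), (0:ℝ)) = ((0:ℝ), (1:ℝ)) := by
    apply Prod.ext
    · show 2*κ*0 = 0; ring
    · show 1 - κ*0 = 1; ring
  have hPhiB00 : PhiB ((0:ℝ), (0:ℝ)) = ((0:ℝ), (1:ℝ)) := by
    apply Prod.ext
    · show (0:ℝ) + 0 = 0; ring
    · show 1 - 2*(0:ℝ) = 1; ring
  have hfhalf : f (1/2) = ((0:ℝ), (1:ℝ)) := by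
    rw [hf]
    simp only
    rw [show 2*(1/2 : ℝ) = 1 by norm_num, hcl_id 1 ⟨by norm_num, le_refl _⟩, h11, hLA10]
  have hghalf : g (1/2) = ((0:ℝ), (1:ℝ)) := by
    rw [hg]
    simp only
    rw [show 2*(1/2 : ℝ) - 1 = 0 by norm_num, hcl_id 0 ⟨le_refl _, by norm_num⟩, h02, hPhiB00]
  set γfun : ℝ → ℝ × ℝ := fun t => if t ≤ 1/2 then f t else g t with hγdef
  have hγ_eval : ∀ t : ℝ, γfun t = if t ≤ 1/2 then f t else g t := fun t => rfl
  refine ⟨γfun, ?_, ?_, ?_, ?_, ?_, ?_⟩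
  · -- continuity
    apply Continuous.continuousOn
    rw [hγdef]
    apply Continuous.if_le hf_cont hg_cont continuous_id continuous_const
    intro x hx
    have hx' : x = 1/2 := hx
    rw [hx', hfhalf, hghalf]
  · -- injectivity
    intro s hs t ht h
    rw [hγ_eval, hγ_eval] at h
    by_cases hs2 : s ≤ 1/2 <;> by_cases ht2 : t ≤ 1/2
    · rw [if_pos hs2, if_pos ht2, hf] at h
      simp only at h
      have hsI : 2*s ∈ Icc (0:ℝ) 1 := ⟨by linarith [hs.1], by linarith⟩
      have htI : 2*t ∈ Icc (0:ℝ) 1 := ⟨by linarith [ht.1], by linarith⟩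
      rw [hcl_id _ hsI, hcl_id _ htI] at h
      have := hi1 hsI htI (LA_inj hκ0 h)
      linarith
    · -- s left, t right: common value must be the corner, contradiction
      exfalso
      rw [if_pos hs2, if_neg ht2, hf, hg] at h
      simp only at h
      push_neg at ht2
      have hsI : 2*s ∈ Icc (0:ℝ) 1 := ⟨by linarith [hs.1], by linarith⟩
      have htI : 2*t - 1 ∈ Icc (0:ℝ) 1 := ⟨by linarith, by linarith [ht.2]⟩
      rw [hcl_id _ hsI, hcl_id _ htI] at h
      have hq : δ₂ (2*t-1) ∈ T := hT2 _ htI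
      have hcorner : δ₁ (2*s) = ((1:ℝ), (0:ℝ)) := by
        apply LA_corner hκ0 hκ1 (hT1 _ hsI)
        rw [h]
        exact (PhiB_mem hq).2.2
      rw [hcorner, hLA10] at h
      have h7 : δ₂ (2*t-1) = ((0:ℝ), (0:ℝ)) := PhiB_inj (by rw [hPhiB00, h])
      have h8 : (2*t-1 : ℝ) = 0 := by
        have := hi2 htI ⟨le_refl _, by norm_num⟩ (by rw [h7, h02])
        linarith [this]
      linarith
    · -- t left, s right: symmetric
      exfalso
      rw [if_neg hs2, if_pos ht2, hf, hg] at h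
      simp only at h
      push_neg at hs2
      have htI : 2*t ∈ Icc (0:ℝ) 1 := ⟨by linarith [ht.1], by linarith⟩
      have hsI : 2*s - 1 ∈ Icc (0:ℝ) 1 := ⟨by linarith, by linarith [hs.2]⟩
      rw [hcl_id _ htI, hcl_id _ hsI] at h
      have hq : δ₂ (2*s-1) ∈ T := hT2 _ hsI
      have hcorner : δ₁ (2*t) = ((1:ℝ), (0:ℝ)) := by
        apply LA_corner hκ0 hκ1 (hT1 _ htI)
        rw [← h]
        exact (PhiB_mem hq).2.2
      rw [hcorner, hLA10] at h
      have h7 : δ₂ (2*s-1) = ((0:ℝ), (0:ℝ)) := PhiB_inj (by rw [hPhiB00, ← h])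
      have h8 : (2*s-1 : ℝ) = 0 := by
        have := hi2 hsI ⟨le_refl _, by norm_num⟩ (by rw [h7, h02])
        linarith [this]
      linarith
    · rw [if_neg hs2, if_neg ht2, hg] at h
      simp only at h
      push_neg at hs2 ht2
      have hsI : 2*s - 1 ∈ Icc (0:ℝ) 1 := ⟨by linarith, by linarith [hs.2]⟩
      have htI : 2*t - 1 ∈ Icc (0:ℝ) 1 := ⟨by linarith, by linarith [ht.2]⟩
      rw [hcl_id _ hsI, hcl_id _ htI] at h
      have := hi2 hsI htI (PhiB_inj h)
      linarith
  · -- image inside the unit square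
    rintro x ⟨t, ht, rfl⟩
    rw [hγ_eval]
    split_ifs with h2
    · have hsI : 2*t ∈ Icc (0:ℝ) 1 := ⟨by linarith [ht.1], by linarith⟩
      rw [hf]
      simp only
      rw [hcl_id _ hsI]
      obtain ⟨e1, e2, e3⟩ := LA_mem hκ0 (le_of_lt hκ1) (hT1 _ hsI)
      exact ⟨⟨e1, by linarith⟩, ⟨e2, by linarith⟩⟩
    · push_neg at h2
      have hsI : 2*t - 1 ∈ Icc (0:ℝ) 1 := ⟨by linarith, by linarith [ht.2]⟩
      rw [hg]
      simp only
      rw [hcl_id _ hsI]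
      obtain ⟨e1, e2, e3⟩ := PhiB_mem (hT2 _ hsI)
      exact ⟨⟨by linarith, e1⟩, ⟨by linarith, e2⟩⟩
  · -- starts at the origin
    rw [hγ_eval, if_pos (by norm_num : (0:ℝ) ≤ 1/2), hf]
    simp only
    rw [show 2*(0:ℝ) = 0 by ring, hcl_id 0 ⟨le_refl _, by norm_num⟩, h01]
    apply Prod.ext
    · show 2*κ*0 = 0; ring
    · show 0 - κ*0 = 0; ring
  · -- ends at (1,1)
    rw [hγ_eval, if_neg (by norm_num : ¬ (1:ℝ) ≤ 1/2), hg]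
    simp only
    rw [show 2*(1:ℝ) - 1 = 1 by ring, hcl_id 1 ⟨by norm_num, le_refl _⟩, h12]
    apply Prod.ext
    · show (1:ℝ) + 0 = 1; ring
    · show 1 - 2*(0:ℝ) = 1; ring
  · -- the measure computation
    have himg : γfun '' Icc 0 1
        = (⇑(LA κ) '' (δ₁ '' Icc 0 1)) ∪ (PhiB '' (δ₂ '' Icc 0 1)) := by
      apply Subset.antisymm
      · rintro x ⟨t, ht, rfl⟩
        rw [hγ_eval]
        by_cases h2 : t ≤ 1/2
        · left
          have hsI : 2*t ∈ Icc (0:ℝ) 1 := ⟨by linarith [ht.1], by linarith⟩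
          rw [if_pos h2, hf]
          simp only
          rw [hcl_id _ hsI]
          exact ⟨δ₁ (2*t), ⟨2*t, hsI, rfl⟩, rfl⟩
        · right
          push_neg at h2
          have hsI : 2*t - 1 ∈ Icc (0:ℝ) 1 := ⟨by linarith, by linarith [ht.2]⟩
          rw [if_neg (by push_neg; exact h2), hg]
          simp only
          rw [hcl_id _ hsI]
          exact ⟨δ₂ (2*t-1), ⟨2*t-1, hsI, rfl⟩, rfl⟩
      · rintro x (⟨y, ⟨s, hs, rfl⟩, rfl⟩ | ⟨y, ⟨s, hs, rfl⟩, rfl⟩)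
        · refine ⟨s/2, ⟨by linarith [hs.1], by linarith [hs.2]⟩, ?_⟩
          rw [hγ_eval, if_pos (by linarith [hs.2] : s/2 ≤ 1/2), hf]
          simp only
          rw [show 2*(s/2) = s by ring, hcl_id s hs]
        · rcases eq_or_lt_of_le hs.1 with h0 | h0
          · refine ⟨1/2, ⟨by norm_num, by norm_num⟩, ?_⟩
            rw [hγ_eval, if_pos le_rfl]
            rw [show f (1/2) = ((0:ℝ),(1:ℝ)) from hfhalf, ← h0, h02, hPhiB00]
          · refine ⟨(s+1)/2, ⟨by linarith, by linarith [hs.2]⟩, ?_⟩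
            rw [hγ_eval, if_neg (by push_neg; linarith : ¬ (s+1)/2 ≤ 1/2), hg]
            simp only
            rw [show 2*((s+1)/2) - 1 = s by ring, hcl_id s hs]
    rw [himg]
    have hd1comp : IsCompact (δ₁ '' Icc (0:ℝ) 1) := isCompact_Icc.image_of_continuousOn hc1
    have hd2comp : IsCompact (δ₂ '' Icc (0:ℝ) 1) := isCompact_Icc.image_of_continuousOn hc2
    have hXBm : MeasurableSet (PhiB '' (δ₂ '' Icc (0:ℝ) 1)) :=
      (hd2comp.image hPhiB_cont).measurableSet
    have hint : volume ((⇑(LA κ) '' (δ₁ '' Icc 0 1)) ∩ (PhiB '' (δ₂ '' Icc 0 1))) = 0 := by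
      apply measure_mono_null _ (vol_horiz_line 1)
      rintro x ⟨⟨y, ⟨s, hs, rfl⟩, rfl⟩, ⟨z, ⟨u, hu, rfl⟩, hzx⟩⟩
      have hcorner : δ₁ s = ((1:ℝ), (0:ℝ)) := by
        apply LA_corner hκ0 hκ1 (hT1 _ hs)
        rw [← hzx]
        exact (PhiB_mem (hT2 _ hu)).2.2
      rw [hcorner, hLA10]
      rfl
    have hkey := measure_union_add_inter (μ := volume) (⇑(LA κ) '' (δ₁ '' Icc 0 1)) hXBm
    rw [hint, add_zero] at hkey
    rw [hkey, vol_LA_image hκ0, vol_PhiB_image, hv1, hv2]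
    rw [← ENNReal.ofReal_mul (by positivity), ← ENNReal.ofReal_mul (by norm_num),
      ← ENNReal.ofReal_add (by positivity) (by rw [hm₂]; positivity)]
    congr 1
    rw [hκdef, hm₁, hm₂]
    field_simp
    ring
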